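/- Fix α ∈ (0,1) and τ_M, τ_A, 𝒜 > 0. For x ≥ 0 define 𝓘(x) := −τ_M^{−1} − x^{1−α} τ_A^{−α} sin(απ/2) Γ(α+1) and 𝓡(x) := x + x^{1−α} τ_A^{−α} cos(απ/2) Γ(α+1), where Γ is the Euler Gamma function, and for ω ∈ ℝ define Ξ(ω) := sgn(ω) · 𝓘(|ω|) |ω| / ( (𝓡(|ω|) + 𝒜 |ω|)² + 𝓘(|ω|)² ). Then Ξ is an odd continuous function on ℝ, and Ξ is differentiable at ω = 0 with Ξ'(0) = −τ_M. -/
import Mathlib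


/-- The kink-shaped profile `Ξ` of the realistic Efroimsky–Makarov tidal torque is an odd
continuous function on `ℝ`, differentiable at `0` with `Ξ'(0) = -τ_M`. -/
theorem tidal_torque_profile_odd_continuous_deriv_at_zero
    (α τM τA 𝒜 : ℝ) (hα : α ∈ Set.Ioo (0:ℝ) 1)
    (hτM : 0 < τM) (hτA : 0 < τA) (h𝒜 : 0 < 𝒜)
    (I R : ℝ → ℝ)
    (hI : ∀ x, 0 ≤ x → I x
      = -τM⁻¹ - x ^ (1 - α) * τA ^ (-α) * Real.sin (α * Real.pi / 2) * Real.Gamma (α + 1))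
    (hR : ∀ x, 0 ≤ x → R x
      = x + x ^ (1 - α) * τA ^ (-α) * Real.cos (α * Real.pi / 2) * Real.Gamma (α + 1))
    (Ξ : ℝ → ℝ)
    (hΞ : ∀ w, Ξ w = Real.sign w * (I |w| * |w|) / ((R |w| + 𝒜 * |w|) ^ 2 + (I |w|) ^ 2)) :
    (∀ w, Ξ (-w) = -Ξ w) ∧ Continuous Ξ ∧ HasDerivAt Ξ (-τM) 0 := by
  obtain ⟨hα0, hα1⟩ := hα
  have h1α : 0 < 1 - α := by linarith
  -- auxiliary function g
  set g : ℝ → ℝ := fun w =>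
    (-τM⁻¹ - |w| ^ (1 - α) * τA ^ (-α) * Real.sin (α * Real.pi / 2) * Real.Gamma (α + 1)) /
      (((|w| + |w| ^ (1 - α) * τA ^ (-α) * Real.cos (α * Real.pi / 2) * Real.Gamma (α + 1))
          + 𝒜 * |w|) ^ 2
        + (-τM⁻¹ - |w| ^ (1 - α) * τA ^ (-α) * Real.sin (α * Real.pi / 2)
            * Real.Gamma (α + 1)) ^ 2) with hg
  have hsin : 0 < Real.sin (α * Real.pi / 2) := by
    apply Real.sin_pos_of_pos_of_lt_pi
    · positivity
    · nlinarith [Real.pi_pos]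
  have hΓ : 0 < Real.Gamma (α + 1) := Real.Gamma_pos_of_pos (by linarith)
  have hτA' : (0:ℝ) < τA ^ (-α) := Real.rpow_pos_of_pos hτA _
  have hIneg : ∀ w : ℝ,
      -τM⁻¹ - |w| ^ (1 - α) * τA ^ (-α) * Real.sin (α * Real.pi / 2) * Real.Gamma (α + 1) < 0 := by
    intro w
    have h1 : 0 ≤ |w| ^ (1 - α) := Real.rpow_nonneg (abs_nonneg w) _
    have h2 : 0 < τM⁻¹ := inv_pos.mpr hτM
    have h3 : 0 ≤ |w| ^ (1 - α) * τA ^ (-α) * Real.sin (α * Real.pi / 2) * Real.Gamma (α + 1) :=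
      mul_nonneg (mul_nonneg (mul_nonneg h1 hτA'.le) hsin.le) hΓ.le
    linarith
  have hDpos : ∀ w : ℝ, 0 <
      ((|w| + |w| ^ (1 - α) * τA ^ (-α) * Real.cos (α * Real.pi / 2) * Real.Gamma (α + 1))
          + 𝒜 * |w|) ^ 2
        + (-τM⁻¹ - |w| ^ (1 - α) * τA ^ (-α) * Real.sin (α * Real.pi / 2)
            * Real.Gamma (α + 1)) ^ 2 := by
    intro w
    have := hIneg w
    nlinarith
  have hsign : ∀ w : ℝ, Real.sign w * |w| = w := by
    intro w
    rcases lt_trichotomy w 0 with h | h | h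
    · rw [Real.sign_of_neg h, abs_of_neg h]; ring
    · simp [h]
    · rw [Real.sign_of_pos h, abs_of_pos h]; ring
  have key : ∀ w : ℝ, Ξ w = w * g w := by
    intro w
    rw [hΞ w, hI _ (abs_nonneg w), hR _ (abs_nonneg w), hg]
    simp only
    rw [mul_left_comm, hsign w, mul_comm, mul_div_assoc]
  -- continuity of g
  have hrc : Continuous fun w : ℝ => |w| ^ (1 - α) :=
    (Real.continuous_rpow_const h1α.le).comp continuous_abs
  have hgc : Continuous g := by
    rw [hg]
    apply Continuous.div
    · fun_prop
    · fun_prop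
    · exact fun w => (hDpos w).ne'
  have hΞeq : Ξ = fun w => w * g w := funext key
  have hg0 : g 0 = -τM := by
    rw [hg]
    simp only [abs_zero, Real.zero_rpow h1α.ne']
    field_simp
    ring
  refine ⟨?_, ?_, ?_⟩
  · intro w
    have hgw : g (-w) = g w := by rw [hg]; simp only [abs_neg]
    rw [key, key, hgw]; ring
  · rw [hΞeq]; exact continuous_id.mul hgc
  · rw [hasDerivAt_iff_tendsto_slope]
    have h1 : ∀ w ∈ ({(0:ℝ)}ᶜ : Set ℝ), g w = slope Ξ 0 w := by
      intro w hw
      have hw0 : w ≠ 0 := hw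
      rw [slope_def_field, key, key 0, zero_mul, sub_zero, sub_zero, mul_comm,
        mul_div_assoc, div_self hw0, mul_one]
    have h2 : Filter.Tendsto g (nhdsWithin 0 {(0:ℝ)}ᶜ) (nhds (-τM)) := by
      rw [← hg0]
      exact (hgc.continuousAt.tendsto).mono_left nhdsWithin_le_nhds
    exact h2.congr' (Filter.eventually_of_mem self_mem_nhdsWithin h1)
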